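/- Let T > 0, U := {u ∈ L²([0,T],ℝ) : 0 ≤ u(τ) ≤ 1 for a.e. τ}, u ∈ U, η > 0, and w ∈ L²([0,T],ℝ) (in the paper, w = −∇_u J, the negative Riesz representative of the differential of the objective functional). Then Π_U[u + ηw] = Π_U[u + η Π_{C_u}[w]] in L²([0,T],ℝ), where Π_U[·](τ) = max(min(·(τ),1),0) is the metric projection onto U and Π_{C_u}[v](τ) := max(v(τ),0)·1_{{u=0}}(τ) + min(v(τ),0)·1_{{u=1}}(τ) + v(τ)·1_{{0<u<1}}(τ) is the metric projection onto the tangent cone C_u := { v ∈ L² : v ≤ 0 a.e. on {u=1}, v ≥ 0 a.e. on {u=0} }. -/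

import Mathlib

open MeasureTheory Set Filter Topology

/-- The reference measure: Lebesgue measure restricted to `[0,T]`. -/
noncomputable def muT (T : ℝ) : Measure ℝ := volume.restrict (Icc 0 T)

/-- Membership in the set of admissible controls
`U = {u ∈ L²([0,T]) : 0 ≤ u ≤ 1 a.e.}`. -/
def InU (T : ℝ) (u : ℝ → ℝ) : Prop :=
  MemLp u 2 (muT T) ∧ ∀ᵐ τ ∂(muT T), u τ ∈ Icc (0:ℝ) 1

/-- The metric projection onto `U`: `Π_U[v](τ) = max(min(v(τ),1),0)`. -/
noncomputable def projU (v : ℝ → ℝ) : ℝ → ℝ := fun τ => max (min (v τ) 1) 0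

/-- The metric projection onto the tangent cone `C_u`:
`Π_{C_u}[v] = max(v,0)·1_{u=0} + min(v,0)·1_{u=1} + v·1_{0<u<1}`. -/
noncomputable def projCu (u v : ℝ → ℝ) : ℝ → ℝ := fun τ =>
  (if u τ = 0 then max (v τ) 0 else 0) + (if u τ = 1 then min (v τ) 0 else 0) +
    (if 0 < u τ ∧ u τ < 1 then v τ else 0)

/-- **Projected gradient step = projected tangential step.** For `u ∈ U`, `η > 0` and
`w ∈ L²` (in the paper, `w = −∇_u J`), one has
`Π_U[u + ηw] = Π_U[u + η Π_{C_u}[w]]` in `L²([0,T])`. -/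
theorem projected_step_eq (T : ℝ) (hT : 0 < T)
    (u : ℝ → ℝ) (hu : InU T u) (η : ℝ) (hη : 0 < η)
    (w : ℝ → ℝ) (hw : MemLp w 2 (muT T)) :
    projU (fun τ => u τ + η * w τ) =ᵐ[muT T]
      projU (fun τ => u τ + η * projCu u w τ) := by
  filter_upwards [hu.2] with τ hτ
  obtain ⟨h0, h1⟩ := hτ
  simp only [projU, projCu]
  rcases eq_or_lt_of_le h0 with h0' | h0'
  · -- u τ = 0
    have hu0 : u τ = 0 := h0'.symm
    rcases le_or_gt 0 (w τ) with hw0 | hw0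
    · norm_num [hu0, max_eq_left hw0]
    · have hneg : η * w τ < 0 := mul_neg_of_pos_of_neg hη hw0
      norm_num [hu0, max_eq_right hw0.le]
      linarith
  · rcases eq_or_lt_of_le h1 with h1' | h1'
    · -- u τ = 1
      rcases le_or_gt (w τ) 0 with hw0 | hw0
      · norm_num [h1', min_eq_left hw0]
      · have hpos : 0 < η * w τ := mul_pos hη hw0
        norm_num [h1', min_eq_right hw0.le]
        try rw [min_eq_right (by linarith : (1:ℝ) ≤ 1 + η * w τ)]
        try exact max_eq_left zero_le_one
    · -- 0 < u τ < 1
      have hne0 : u τ ≠ 0 := ne_of_gt h0'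
      have hne1 : u τ ≠ 1 := ne_of_lt h1'
      simp [hne0, hne1, h0', h1']
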